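/- Let D be a triangulated category with a bounded t-structure, d ≥ 1, and Y a full subcategory of D^{[-d+1,0]}. Then Y^{⊥_{≤0}} = (Fac_d Y)^{⊥_{≤0}} = (Fac_d Y)^⊥, where Y^{⊥_{≤0}} = {Z ∈ D^{[-d+1,0]} : Hom(Y, Z[j]) = 0 for all Y ∈ Y and all j ≤ 0}. -/

import Mathlib

open CategoryTheory Category Limits Pretriangulated Triangulated

universe v u

variable {C : Type u} [Category.{v} C] [Preadditive C] [HasZeroObject C] [HasShift C ℤ]
  [∀ (n : ℤ), (shiftFunctor C n).Additive] [Pretriangulated C]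

/-- The t-structure `t` is bounded. -/
def IsBoundedTStr (t : TStructure C) : Prop :=
  ∀ X : C, ∃ a b : ℤ, t.ge a X ∧ t.le b X

/-- The `d`-extended heart `D^{[-d+1,0]}` of the t-structure `t`, as a set of objects. -/
def extHeart (t : TStructure C) (d : ℕ) : Set C :=
  fun X => t.le 0 X ∧ t.ge (1 - (d : ℤ)) X

/-- A set of objects closed under isomorphisms. -/
def IsoClosed (S : Set C) : Prop := ∀ ⦃X Y : C⦄, (X ≅ Y) → X ∈ S → Y ∈ S

/-- `Z ∈ D^{[-d+1,0]}` is a `d`-factor of `𝒳`: there are `d` distinguished triangles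
`Z_i → X_i → Z_{i-1} → Z_i[1]` (`1 ≤ i ≤ d`) with `Z_0 = Z`, `Z_i ∈ D^{[-d+1,0]}` and
`X_i ∈ 𝒳`. -/
def IsDFactor (t : TStructure C) (d : ℕ) (𝒳 : Set C) (Z : C) : Prop :=
  Z ∈ extHeart t d ∧
  ∃ (Zc : ℕ → C) (Xc : ℕ → C), Zc 0 = Z ∧
    ∀ i : ℕ, 1 ≤ i → i ≤ d →
      Zc i ∈ extHeart t d ∧ Xc i ∈ 𝒳 ∧
      ∃ (f : Zc i ⟶ Xc i) (g : Xc i ⟶ Zc (i - 1)) (h : Zc (i - 1) ⟶ (Zc i)⟦(1 : ℤ)⟧),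
        Triangle.mk f g h ∈ (distTriang C)

/-- `Fac_d(𝒳)`, the set of `d`-factors of `𝒳`. -/
def facd (t : TStructure C) (d : ℕ) (𝒳 : Set C) : Set C := fun Z => IsDFactor t d 𝒳 Z

/-- `𝒳` is closed under `d`-factors. -/
def ClosedUnderDFactors (t : TStructure C) (d : ℕ) (𝒳 : Set C) : Prop :=
  ∀ Z : C, IsDFactor t d 𝒳 Z → Z ∈ 𝒳

/-- `S` is closed under extensions: the middle term of any distinguished triangle whose
outer terms lie in `S` lies in `S`. -/
def ExtClosed (S : Set C) : Prop :=
  ∀ ⦃X Y Z : C⦄ (f : X ⟶ Y) (g : Y ⟶ Z) (h : Z ⟶ X⟦(1 : ℤ)⟧),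
    Triangle.mk f g h ∈ (distTriang C) → X ∈ S → Z ∈ S → Y ∈ S

/-- `𝒳 ⊆ D^{[-d+1,0]}` is `d`-FAE closed: closed under isomorphisms, `d`-factors and
extensions. -/
def IsDFAEClosed (t : TStructure C) (d : ℕ) (𝒳 : Set C) : Prop :=
  𝒳 ⊆ extHeart t d ∧ IsoClosed 𝒳 ∧ ClosedUnderDFactors t d 𝒳 ∧ ExtClosed 𝒳

/-- `A * B`: the set of objects `Z` fitting in a distinguished triangle `X → Z → Y → X[1]`
with `X ∈ A` and `Y ∈ B`. -/
def star (A B : Set C) : Set C := fun Z =>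
  ∃ (X : C) (_ : X ∈ A) (Y : C) (_ : Y ∈ B) (f : X ⟶ Z) (g : Z ⟶ Y) (h : Y ⟶ X⟦(1 : ℤ)⟧),
    Triangle.mk f g h ∈ (distTriang C)

/-- A suspended subcategory: closed under isomorphisms, extensions and positive shifts. -/
def Suspended (S : Set C) : Prop :=
  IsoClosed S ∧ ExtClosed S ∧ ∀ X ∈ S, X⟦(1 : ℤ)⟧ ∈ S

/-- The aisle `D^{≤ n}` as a set. -/
def aisle (t : TStructure C) (n : ℤ) : Set C := fun X => t.le n X

/-- The coaisle `D^{≥ n}` as a set. -/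
def coaisle (t : TStructure C) (n : ℤ) : Set C := fun X => t.ge n X

/-- The right Hom-orthogonal `S^⊥` inside the extended heart. -/
def rPerp (t : TStructure C) (d : ℕ) (S : Set C) : Set C :=
  fun Z => Z ∈ extHeart t d ∧ ∀ Y ∈ S, ∀ f : Y ⟶ Z, f = 0

/-- The left Hom-orthogonal `^⊥S` inside the extended heart. -/
def lPerp (t : TStructure C) (d : ℕ) (S : Set C) : Set C :=
  fun Z => Z ∈ extHeart t d ∧ ∀ Y ∈ S, ∀ f : Z ⟶ Y, f = 0

/-- `S^{⊥_{≤0}} = {Z ∈ D^{[-d+1,0]} : Hom(S, Z[j]) = 0 for all j ≤ 0}`. -/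
def rPerpLe0 (t : TStructure C) (d : ℕ) (S : Set C) : Set C :=
  fun Z => Z ∈ extHeart t d ∧ ∀ Y ∈ S, ∀ j : ℤ, j ≤ 0 → ∀ f : Y ⟶ Z⟦j⟧, f = 0

/-- `^{⊥_{≤0}}S = {Z ∈ D^{[-d+1,0]} : Hom(Z, S[j]) = 0 for all j ≤ 0}`. -/
def lPerpLe0 (t : TStructure C) (d : ℕ) (S : Set C) : Set C :=
  fun Z => Z ∈ extHeart t d ∧ ∀ Y ∈ S, ∀ j : ℤ, j ≤ 0 → ∀ f : Z ⟶ Y⟦j⟧, f = 0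

/-- `(T, F)` is a torsion pair in the extended heart. -/
def IsTorsionPair (t : TStructure C) (d : ℕ) (T F : Set C) : Prop :=
  T ⊆ extHeart t d ∧ F ⊆ extHeart t d ∧ T = lPerp t d F ∧ F = rPerp t d T

/-- `(T, F)` is a positive torsion pair: a torsion pair with `Hom(T, F[j]) = 0` for all
`j ≤ 0`. -/
def IsPositiveTorsionPair (t : TStructure C) (d : ℕ) (T F : Set C) : Prop :=
  IsTorsionPair t d T F ∧
  ∀ X ∈ T, ∀ Y ∈ F, ∀ j : ℤ, j ≤ 0 → ∀ f : X ⟶ Y⟦j⟧, f = 0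

/-- `(T, F)` is an `s`-torsion pair in the extended heart: `D^{[-d+1,0]} = T * F`,
`Hom(T, F) = 0` and `Hom(T, F[-1]) = 0`. -/
def IsSTorsionPair (t : TStructure C) (d : ℕ) (T F : Set C) : Prop :=
  T ⊆ extHeart t d ∧ F ⊆ extHeart t d ∧
  (∀ Z ∈ extHeart t d,
    ∃ (X : C) (_ : X ∈ T) (Y : C) (_ : Y ∈ F) (f : X ⟶ Z) (g : Z ⟶ Y)
      (h : Y ⟶ X⟦(1 : ℤ)⟧), Triangle.mk f g h ∈ (distTriang C)) ∧
  (∀ X ∈ T, ∀ Y ∈ F, ∀ f : X ⟶ Y, f = 0) ∧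
  (∀ X ∈ T, ∀ Y ∈ F, ∀ f : X ⟶ Y⟦(-1 : ℤ)⟧, f = 0)

/-- A semibrick in the `d`-extended heart. -/
def IsSemibrick (t : TStructure C) (d : ℕ) (S : Set C) : Prop :=
  S ⊆ extHeart t d ∧
  (∀ X ∈ S, ¬ IsZero X ∧ ∀ f : X ⟶ X, f ≠ 0 → IsIso f) ∧
  (∀ X ∈ S, ∀ Y ∈ S, ∀ i : ℤ, i < 0 → ∀ f : X ⟶ Y⟦i⟧, f = 0) ∧
  (∀ X ∈ S, ∀ Y ∈ S, IsEmpty (X ≅ Y) → ∀ f : X ⟶ Y, f = 0)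

/-- The simple objects of an extension-closed subcategory `W` (whose conflations are the
distinguished triangles with all three terms in `W`): nonzero objects admitting no
conflation `L ↣ X ↠ M` in `W` with both `L` and `M` nonzero. -/
def simOf (W : Set C) : Set C := fun X =>
  X ∈ W ∧ ¬ IsZero X ∧
  ∀ ⦃L M : C⦄ (f : L ⟶ X) (g : X ⟶ M) (h : M ⟶ L⟦(1 : ℤ)⟧),
    Triangle.mk f g h ∈ (distTriang C) → L ∈ W → M ∈ W → IsZero L ∨ IsZero M

/-- `FiltMem S X`: the object `X` admits a finite filtration with subquotients in `S`. -/
inductive FiltMem (S : Set C) : C → Prop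
  | zero (X : C) : IsZero X → FiltMem S X
  | step (Y X Sm : C) (f : Y ⟶ X) (g : X ⟶ Sm) (h : Sm ⟶ Y⟦(1 : ℤ)⟧) :
      Triangle.mk f g h ∈ (distTriang C) → FiltMem S Y → Sm ∈ S → FiltMem S X

/-- `ExtClosureMem S X`: membership in the extension closure of `S` (the smallest
subcategory containing `S` and the zero objects, closed under isomorphisms and
extensions). -/
inductive ExtClosureMem (S : Set C) : C → Prop
  | of (X : C) : X ∈ S → ExtClosureMem S X
  | zero (X : C) : IsZero X → ExtClosureMem S X
  | iso (X Y : C) : (X ≅ Y) → ExtClosureMem S X → ExtClosureMem S Y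
  | ext (X Y Z : C) (f : X ⟶ Y) (g : Y ⟶ Z) (h : Z ⟶ X⟦(1 : ℤ)⟧) :
      Triangle.mk f g h ∈ (distTriang C) → ExtClosureMem S X → ExtClosureMem S Z →
      ExtClosureMem S Y

/-- A wide subcategory of the `d`-extended heart: closed under isomorphisms and
extensions, with `Hom(W, W[i]) = 0` for `i < 0`, and such that the restricted
extriangulated structure is abelian, i.e., there is an abelian structure on the
corresponding full subcategory whose short exact sequences (kernel-cokernel pairs) are
exactly the distinguished triangles with all three terms in `W`. -/
def IsWide (t : TStructure C) (d : ℕ) (W : Set C) : Prop :=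
  W ⊆ extHeart t d ∧ IsoClosed W ∧ ExtClosed W ∧
  (∀ X ∈ W, ∀ Y ∈ W, ∀ i : ℤ, i < 0 → ∀ f : X ⟶ Y⟦i⟧, f = 0) ∧
  ∃ _ : Abelian (ObjectProperty.FullSubcategory fun X => X ∈ W),
    ∀ (X Y Z : ObjectProperty.FullSubcategory fun X => X ∈ W) (f : X ⟶ Y) (g : Y ⟶ Z),
      ((f ≫ g = 0) ∧
        (∀ (V : ObjectProperty.FullSubcategory fun X => X ∈ W) (k : V ⟶ Y), k ≫ g = 0 →
          ∃! l : V ⟶ X, l ≫ f = k) ∧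
        (∀ (V : ObjectProperty.FullSubcategory fun X => X ∈ W) (k : Y ⟶ V), f ≫ k = 0 →
          ∃! l : Z ⟶ V, g ≫ l = k))
      ↔ ∃ h : Z.obj ⟶ X.obj⟦(1 : ℤ)⟧,
          Triangle.mk (show X.obj ⟶ Y.obj from f.hom) (show Y.obj ⟶ Z.obj from g.hom) h ∈
            (distTriang C)

/-- A finite-length wide subcategory: a wide subcategory in which every object has a
finite filtration with simple subquotients. -/
def IsFiniteLengthWide (t : TStructure C) (d : ℕ) (W : Set C) : Prop :=
  IsWide t d W ∧ ∀ X ∈ W, FiltMem (simOf W) X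

/-- The shift `S[n]` of a set of objects. -/
def shiftSet (S : Set C) (n : ℤ) : Set C := fun X => X⟦-n⟧ ∈ S

/-- The exact heart `H_T = (D^{≤ -d} * T) ∩ (T^⊥[1] * D^{≥ 0})` of a `d`-FAE closed
subcategory `T`. -/
def heartOf (t : TStructure C) (d : ℕ) (T : Set C) : Set C :=
  star (aisle t (-(d : ℤ))) T ∩ star (shiftSet (rPerp t d T) 1) (coaisle t 0)

/-- `phiClosure t d S`: the smallest `d`-FAE closed subcategory of the extended heart
containing `S`. -/
def phiClosure (t : TStructure C) (d : ℕ) (S : Set C) : Set C :=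
  fun X => ∀ U : Set C, IsDFAEClosed t d U → S ⊆ U → X ∈ U

section AuxRPL

open Triangulated ZeroObject

/-! ### Basic t-structure lemmas -/

lemma rplZero (t : TStructure C) {X Y : C} (f : X ⟶ Y) (a b : ℤ) (hab : a < b)
    (hX : t.le a X) (hY : t.ge b Y) : f = 0 := by
  have hX' : t.le 0 (X⟦a⟧) := t.le_shift a a 0 (by omega) X hX
  have hY' : t.ge 1 (Y⟦a⟧) := t.ge_antitone (show (1:ℤ) ≤ b - a by omega) _
    (t.ge_shift b a (b - a) (by omega) Y hY)
  have h0 : (shiftFunctor C a).map f = 0 := t.zero' _ hX' hY'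
  apply (shiftFunctor C a).map_injective
  rw [h0, Functor.map_zero]

lemma rplLEOfOrth (t : TStructure C) (n : ℤ) (X : C)
    (h : ∀ (T : C), t.ge (n + 1) T → ∀ f : X ⟶ T, f = 0) : t.le n X := by
  obtain ⟨A, B, hA, hB, f, g, δ, hT⟩ := t.exists_triangle X n (n + 1) rfl
  obtain ⟨r, hr⟩ := Triangle.yoneda_exact₃ _ hT (𝟙 B) (by
    exact (comp_id g).trans (h B hB g))
  have hr0 : r = 0 := rplZero t r (n - 1) (n + 1) (by omega)
    (t.le_shift n 1 (n - 1) (by omega) A hA) hB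
  have hB0 : IsZero B := by
    rw [IsZero.iff_id_eq_zero, hr, hr0, comp_zero]
    rfl
  have : IsIso (Triangle.mk f g δ).mor₁ := (Triangle.isZero₃_iff_isIso₁ _ hT).1 hB0
  exact ((t.le n).prop_iff_of_iso (asIso (Triangle.mk f g δ).mor₁)).1 hA

lemma rplGEOfOrth (t : TStructure C) (n : ℤ) (X : C)
    (h : ∀ (T : C), t.le (n - 1) T → ∀ f : T ⟶ X, f = 0) : t.ge n X := by
  obtain ⟨A, B, hA, hB, f, g, δ, hT⟩ := t.exists_triangle X (n - 1) n (by omega)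
  obtain ⟨r, hr⟩ := Triangle.coyoneda_exact₂ _ (inv_rot_of_distTriang _ hT) (𝟙 A) (by
    exact (id_comp f).trans (h A hA f))
  have hr0 : r = 0 := rplZero t r (n - 1) (n + 1) (by omega) hA
    (t.ge_shift n (-1) (n + 1) (by omega) B hB)
  have hA0 : IsZero A := by
    rw [IsZero.iff_id_eq_zero, hr, hr0, zero_comp]
    rfl
  have : IsIso (Triangle.mk f g δ).mor₂ := (Triangle.isZero₁_iff_isIso₂ _ hT).1 hA0
  exact ((t.ge n).prop_iff_of_iso (asIso (Triangle.mk f g δ).mor₂)).2 hB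

lemma rplLEExt (t : TStructure C) (T : Triangle C) (hT : T ∈ distTriang C) (n : ℤ)
    (h₁ : t.le n T.obj₁) (h₃ : t.le n T.obj₃) : t.le n T.obj₂ := by
  apply rplLEOfOrth
  intro W hW f
  obtain ⟨g, hg⟩ := Triangle.yoneda_exact₂ _ hT f (rplZero t _ n (n+1) (by omega) h₁ hW)
  rw [hg, rplZero t g n (n+1) (by omega) h₃ hW, comp_zero]

lemma rplGEExt (t : TStructure C) (T : Triangle C) (hT : T ∈ distTriang C) (n : ℤ)
    (h₁ : t.ge n T.obj₁) (h₃ : t.ge n T.obj₃) : t.ge n T.obj₂ := by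
  apply rplGEOfOrth
  intro W hW f
  obtain ⟨g, hg⟩ := Triangle.coyoneda_exact₂ _ hT f (rplZero t _ (n-1) n (by omega) hW h₃)
  rw [hg, rplZero t g (n-1) n (by omega) hW h₁, zero_comp]

lemma rplLEZero (t : TStructure C) (n : ℤ) {X : C} (hX : IsZero X) : t.le n X :=
  rplLEOfOrth t n X (fun _ _ f => hX.eq_of_src f 0)

lemma rplGEZero (t : TStructure C) (n : ℤ) {X : C} (hX : IsZero X) : t.ge n X :=
  rplGEOfOrth t n X (fun _ _ f => hX.eq_of_tgt f 0)

/-! ### extHeart lemmas -/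

lemma rplExtHeartIso (t : TStructure C) (d : ℕ) {X Y : C} (e : X ≅ Y)
    (hX : X ∈ extHeart t d) : Y ∈ extHeart t d :=
  ⟨((t.le 0).prop_iff_of_iso e).1 hX.1, ((t.ge _).prop_iff_of_iso e).1 hX.2⟩

lemma rplZeroExtHeart (t : TStructure C) (d : ℕ) : (0 : C) ∈ extHeart t d :=
  ⟨rplLEZero t _ (isZero_zero C), rplGEZero t _ (isZero_zero C)⟩

lemma rplBiprodExtHeart (t : TStructure C) (d : ℕ) {X Y : C}
    (hX : X ∈ extHeart t d) (hY : Y ∈ extHeart t d) : (X ⊞ Y) ∈ extHeart t d :=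
  ⟨rplLEExt t _ (binaryBiproductTriangle_distinguished X Y) 0 hX.1 hY.1,
   rplGEExt t _ (binaryBiproductTriangle_distinguished X Y) _ hX.2 hY.2⟩

/-! ### iterated shifts -/

def rplItsh : ℕ → C → C
  | 0, V => V
  | (k+1), V => rplItsh k (V⟦(-1:ℤ)⟧)

def rplUsh : ℕ → C → C
  | 0, V => V
  | (k+1), V => rplUsh k (V⟦(1:ℤ)⟧)

lemma rplItshSuccOuter : ∀ (k : ℕ) (V : C), rplItsh (k+1) V = (rplItsh k V)⟦(-1:ℤ)⟧
  | 0, _ => rfl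
  | (k+1), V => rplItshSuccOuter k (V⟦(-1:ℤ)⟧)

lemma rplItshLE (t : TStructure C) :
    ∀ (k : ℕ) (V : C) (b c : ℤ), b + k = c → t.le b V → t.le c (rplItsh k V)
  | 0, V, b, c, hc, hb => by
      obtain rfl : b = c := by push_cast at hc; omega
      exact hb
  | (k+1), V, b, c, hc, hb =>
      rplItshLE t k (V⟦(-1:ℤ)⟧) (b+1) c (by push_cast at hc ⊢; omega)
        (t.le_shift b (-1) (b+1) (by omega) V hb)

lemma rplItshGE (t : TStructure C) :
    ∀ (k : ℕ) (V : C) (b c : ℤ), b + k = c → t.ge b V → t.ge c (rplItsh k V)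
  | 0, V, b, c, hc, hb => by
      obtain rfl : b = c := by push_cast at hc; omega
      exact hb
  | (k+1), V, b, c, hc, hb =>
      rplItshGE t k (V⟦(-1:ℤ)⟧) (b+1) c (by push_cast at hc ⊢; omega)
        (t.ge_shift b (-1) (b+1) (by omega) V hb)

lemma rplUshLE (t : TStructure C) :
    ∀ (k : ℕ) (V : C) (b c : ℤ), b - k = c → t.le b V → t.le c (rplUsh k V)
  | 0, V, b, c, hc, hb => by
      obtain rfl : b = c := by push_cast at hc; omega
      exact hb
  | (k+1), V, b, c, hc, hb =>
      rplUshLE t k (V⟦(1:ℤ)⟧) (b-1) c (by push_cast at hc ⊢; omega)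
        (t.le_shift b 1 (b-1) (by omega) V hb)

lemma rplUshGE (t : TStructure C) :
    ∀ (k : ℕ) (V : C) (b c : ℤ), b - k = c → t.ge b V → t.ge c (rplUsh k V)
  | 0, V, b, c, hc, hb => by
      obtain rfl : b = c := by push_cast at hc; omega
      exact hb
  | (k+1), V, b, c, hc, hb =>
      rplUshGE t k (V⟦(1:ℤ)⟧) (b-1) c (by push_cast at hc ⊢; omega)
        (t.ge_shift b 1 (b-1) (by omega) V hb)

lemma rplItshExtHeart (t : TStructure C) (d : ℕ) (k : ℕ) (V : C) (b c : ℤ)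
    (hb : t.le b V) (hc : t.ge c V) (h1 : b + k ≤ 0) (h2 : 1 - (d:ℤ) ≤ c) :
    rplItsh k V ∈ extHeart t d :=
  ⟨t.le_monotone h1 _ (rplItshLE t k V b (b+k) rfl hb),
   t.ge_antitone (show 1 - (d:ℤ) ≤ c + k by omega) _ (rplItshGE t k V c (c+k) rfl hc)⟩

noncomputable def rplItshMapIso : (k : ℕ) → {V W : C} → (V ≅ W) → (rplItsh k V ≅ rplItsh k W)
  | 0, _, _, e => e
  | (k+1), _, _, e => rplItshMapIso k ((shiftFunctor C (-1:ℤ)).mapIso e)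

noncomputable def rplUshMapIso : (k : ℕ) → {V W : C} → (V ≅ W) → (rplUsh k V ≅ rplUsh k W)
  | 0, _, _, e => e
  | (k+1), _, _, e => rplUshMapIso k ((shiftFunctor C (1:ℤ)).mapIso e)

noncomputable def rplUshShiftIso : (k : ℕ) → (W : C) →
    (rplUsh k (W⟦(-1:ℤ)⟧) ≅ (rplUsh k W)⟦(-1:ℤ)⟧)
  | 0, _ => Iso.refl _
  | (k+1), W =>
      (rplUshMapIso k ((((shiftFunctorCompIsoId C (-1:ℤ) (1:ℤ) (by omega)).app W).trans
        (((shiftFunctorCompIsoId C (1:ℤ) (-1:ℤ) (by omega)).app W).symm)))).trans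
        (rplUshShiftIso k (W⟦(1:ℤ)⟧))

noncomputable def rplItshUshIso : (k : ℕ) → (V : C) → (rplItsh k (rplUsh k V) ≅ V)
  | 0, V => Iso.refl V
  | (k+1), V =>
      ((rplItshMapIso k (rplUshShiftIso k (V⟦(1:ℤ)⟧)).symm).trans
        (rplItshUshIso k (V⟦(1:ℤ)⟧⟦(-1:ℤ)⟧))).trans
        ((shiftFunctorCompIsoId C (1:ℤ) (-1:ℤ) (by omega)).app V)

/-! ### chains -/

inductive RplChain (t : TStructure C) (d : ℕ) (𝒴 : Set C) : ℕ → C → Prop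
  | base (V : C) (hV : V ∈ extHeart t d) : RplChain t d 𝒴 0 V
  | step {k : ℕ} {V Z₁ X : C} (hV : V ∈ extHeart t d) (hX : X ∈ 𝒴)
      {f : Z₁ ⟶ X} {g : X ⟶ V} {h : V ⟶ Z₁⟦(1:ℤ)⟧}
      (hT : Triangle.mk f g h ∈ distTriang C)
      (hc : RplChain t d 𝒴 k Z₁) : RplChain t d 𝒴 (k+1) V

lemma RplChain.mem_extHeart {t : TStructure C} {d : ℕ} {𝒴 : Set C} {k : ℕ} {V : C}
    (h : RplChain t d 𝒴 k V) : V ∈ extHeart t d := by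
  cases h with
  | base _ hV => exact hV
  | step hV hX hT hc => exact hV

lemma RplChain.ofIso {t : TStructure C} {d : ℕ} {𝒴 : Set C} {k : ℕ} {V V' : C}
    (e : V ≅ V') (hc : RplChain t d 𝒴 k V) : RplChain t d 𝒴 k V' := by
  cases hc with
  | base _ hV => exact .base _ (rplExtHeartIso t d e hV)
  | step hV hX hT hc =>
      rename_i k Z₁ X f g hh
      refine RplChain.step (rplExtHeartIso t d e hV) hX
        (f := f) (g := g ≫ e.hom) (h := e.inv ≫ hh) ?_ hc
      refine isomorphic_distinguished _ hT _ ?_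
      refine Triangle.isoMk _ _ (Iso.refl _) (Iso.refl _) e.symm ?_ ?_ ?_
      · exact (comp_id f).trans (id_comp f).symm
      · exact (by simp : (g ≫ e.hom) ≫ e.inv = g).trans (id_comp g).symm
      · exact (congrArg (CategoryStruct.comp _) (CategoryTheory.Functor.map_id _ _)).trans (comp_id _)

lemma RplChain.exists_fun {t : TStructure C} {d : ℕ} {𝒴 : Set C} :
    ∀ {k : ℕ} {V : C}, RplChain t d 𝒴 k V →
    ∃ (Zc Xc : ℕ → C), Zc 0 = V ∧ ∀ i : ℕ, 1 ≤ i → i ≤ k →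
      Zc i ∈ extHeart t d ∧ Xc i ∈ 𝒴 ∧
      ∃ (f : Zc i ⟶ Xc i) (g : Xc i ⟶ Zc (i - 1)) (h : Zc (i - 1) ⟶ (Zc i)⟦(1 : ℤ)⟧),
        Triangle.mk f g h ∈ distTriang C := by
  intro k V h
  induction h with
  | base V hV =>
      exact ⟨fun _ => V, fun _ => V, rfl, fun i h1 h2 => absurd (h1.trans h2) (by omega)⟩
  | step hV hX hT hc ih =>
      rename_i k V Z₁ X f g hh
      obtain ⟨Zc, Xc, h0, H⟩ := ih
      subst h0
      refine ⟨fun i => Nat.casesOn i V Zc,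
        fun i => Nat.casesOn i X (fun l => Nat.casesOn l X (fun l' => Xc (l' + 1))), rfl, ?_⟩
      rintro (_ | (_ | i)) h1 h2
      · exact absurd h1 (by omega)
      · exact ⟨hc.mem_extHeart, hX, f, g, hh, hT⟩
      · exact H (i + 1) (by omega) (by omega)

lemma RplChain.mem_facd {t : TStructure C} {d : ℕ} {𝒴 : Set C} {V : C}
    (h : RplChain t d 𝒴 d V) : V ∈ facd t d 𝒴 := by
  obtain ⟨Zc, Xc, h0, H⟩ := h.exists_fun
  exact ⟨h.mem_extHeart, Zc, Xc, h0, H⟩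

lemma RplChain.stepA {t : TStructure C} {d : ℕ} {𝒴 : Set C} {k : ℕ} {V X : C}
    (hX : X ∈ 𝒴) (hV : V ∈ extHeart t d)
    (hc : RplChain t d 𝒴 k ((V⟦(-1:ℤ)⟧) ⊞ X)) : RplChain t d 𝒴 (k+1) V := by
  have e : ((V⟦(-1:ℤ)⟧)⟦(1:ℤ)⟧) ≅ V := (shiftFunctorCompIsoId C (-1:ℤ) (1:ℤ) (by omega)).app V
  have hT : Triangle.mk (biprod.snd : V⟦(-1:ℤ)⟧ ⊞ X ⟶ X) (0 : X ⟶ V)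
      (e.inv ≫ (binaryBiproductTriangle (V⟦(-1:ℤ)⟧) X).rotate.mor₃) ∈ distTriang C := by
    refine isomorphic_distinguished _
      (rot_of_distTriang _ (binaryBiproductTriangle_distinguished (V⟦(-1:ℤ)⟧) X)) _ ?_
    refine Triangle.isoMk _ _ (Iso.refl _) (Iso.refl _) e.symm ?_ ?_ ?_
    · exact (comp_id _).trans (id_comp _).symm
    · exact zero_comp.trans comp_zero.symm
    · exact (congrArg (CategoryStruct.comp _) (CategoryTheory.Functor.map_id _ _)).trans (comp_id _)
  exact RplChain.step hV hX hT hc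

lemma RplChain.stepB {t : TStructure C} {d : ℕ} {𝒴 : Set C} {k : ℕ} {W X : C}
    (hX : X ∈ 𝒴) (hWX : (W ⊞ X) ∈ extHeart t d)
    (hc : RplChain t d 𝒴 k (W⟦(-1:ℤ)⟧)) : RplChain t d 𝒴 (k+1) (W ⊞ X) := by
  have hT₁ : Triangle.mk (biprod.inr : X ⟶ W ⊞ X) (biprod.fst : W ⊞ X ⟶ W)
      (0 : W ⟶ X⟦(1:ℤ)⟧) ∈ distTriang C := by
    refine isomorphic_distinguished _ (binaryBiproductTriangle_distinguished X W) _ ?_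
    refine Triangle.isoMk _ _ (Iso.refl _) (biprod.braiding W X) (Iso.refl _) ?_ ?_ ?_
    · exact (by apply biprod.hom_ext <;> simp : (biprod.inr : X ⟶ W ⊞ X) ≫ (biprod.braiding W X).hom = biprod.inl)
        |>.trans
        (id_comp _).symm
    · exact (comp_id _).trans (biprod.lift_snd _ _).symm
    · exact zero_comp.trans comp_zero.symm
  exact RplChain.step hWX hX (inv_rot_of_distTriang _ hT₁) hc

lemma rplChainPadYZero (t : TStructure C) (d : ℕ) (𝒴 : Set C) {X : C}
    (hX : X ∈ 𝒴) (hXH : X ∈ extHeart t d) :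
    ∀ k : ℕ, RplChain t d 𝒴 k X ∧ RplChain t d 𝒴 k (0 : C)
  | 0 => ⟨.base X hXH, .base 0 (rplZeroExtHeart t d)⟩
  | (k+1) => by
      obtain ⟨h1, h2⟩ := rplChainPadYZero t d 𝒴 hX hXH k
      constructor
      · exact RplChain.step hXH hX (contractible_distinguished₁ X) h2
      · exact RplChain.step (rplZeroExtHeart t d) hX (contractible_distinguished X) h1

lemma rplChainEvens (t : TStructure C) (d : ℕ) (𝒴 : Set C) {X : C}
    (hX : X ∈ 𝒴) (hXH : X ∈ extHeart t d) :
    ∀ (q : ℕ) (n m : ℕ), n = 2 * q → ∀ (V : C),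
      (∀ i : ℕ, i ≤ n → rplItsh i V ∈ extHeart t d) →
      RplChain t d 𝒴 m (rplItsh n V) → RplChain t d 𝒴 (m + n) V := by
  intro q
  induction q with
  | zero =>
      intro n m hn V hmem hc
      subst hn
      exact hc
  | succ q ih =>
      intro n m hn V hmem hc
      subst hn
      have hc' : RplChain t d 𝒴 m (rplItsh (2*q) ((V⟦(-1:ℤ)⟧)⟦(-1:ℤ)⟧)) := by
        have h2 : 2 * (q+1) = 2*q + 1 + 1 := by ring
        rw [h2] at hc
        exact hc
      have c1 : RplChain t d 𝒴 (m + 2*q) ((V⟦(-1:ℤ)⟧)⟦(-1:ℤ)⟧) :=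
        ih (2*q) m rfl _ (fun i hi => hmem (i+2) (by omega)) hc'
      have c2 : RplChain t d 𝒴 (m + 2*q + 1) ((V⟦(-1:ℤ)⟧) ⊞ X) :=
        RplChain.stepB hX (rplBiprodExtHeart t d (hmem 1 (by omega)) hXH) c1
      have c3 : RplChain t d 𝒴 (m + 2*q + 1 + 1) V :=
        RplChain.stepA hX (hmem 0 (by omega)) c2
      have hl : m + 2*q + 1 + 1 = m + 2*(q+1) := by ring
      rw [hl] at c3
      exact c3

lemma rplChainOdds (t : TStructure C) (d : ℕ) (𝒴 : Set C) {X : C}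
    (hX : X ∈ 𝒴) (hXH : X ∈ extHeart t d) (q n m : ℕ) (hn : n = 2*q + 1) (V : C)
    (hmem : ∀ i : ℕ, i ≤ n → rplItsh i V ∈ extHeart t d)
    (hc : RplChain t d 𝒴 m (rplItsh n V)) : RplChain t d 𝒴 (m + n) (V ⊞ X) := by
  subst hn
  have hc' : RplChain t d 𝒴 m (rplItsh (2*q) (V⟦(-1:ℤ)⟧)) := hc
  have c1 : RplChain t d 𝒴 (m + 2*q) (V⟦(-1:ℤ)⟧) :=
    rplChainEvens t d 𝒴 hX hXH q (2*q) m rfl _ (fun i hi => hmem (i+1) (by omega)) hc'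
  have c2 : RplChain t d 𝒴 (m + 2*q + 1) (V ⊞ X) :=
    RplChain.stepB hX (rplBiprodExtHeart t d (hmem 0 (by omega)) hXH) c1
  have hl : m + 2*q + 1 = m + (2*q + 1) := by ring
  rw [hl] at c2
  exact c2

lemma rplChainPad (t : TStructure C) (d : ℕ) (𝒴 : Set C) {X : C}
    (hX : X ∈ 𝒴) (hXH : X ∈ extHeart t d) (L : C) (p : ℕ)
    (hmem : ∀ i : ℕ, i ≤ p → rplItsh i L ∈ extHeart t d) : RplChain t d 𝒴 p L := by
  rcases Nat.even_or_odd p with ⟨q, hq⟩ | ⟨q, hq⟩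
  · have hp : p = 2*q := by omega
    have c0 : RplChain t d 𝒴 0 (rplItsh p L) := .base _ (hmem p le_rfl)
    have c := rplChainEvens t d 𝒴 hX hXH q p 0 hp L hmem c0
    have hl : 0 + p = p := by omega
    rw [hl] at c
    exact c
  · have hp : p = 2*q + 1 := hq
    have c0 : RplChain t d 𝒴 0 ((rplItsh (2*q) L)⟦(-1:ℤ)⟧ ⊞ X) := by
      refine .base _ (rplBiprodExtHeart t d ?_ hXH)
      have h := hmem p le_rfl
      rw [hp, rplItshSuccOuter] at h
      exact h
    have c1 : RplChain t d 𝒴 1 (rplItsh (2*q) L) :=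
      RplChain.stepA hX (hmem (2*q) (by omega)) c0
    have c2 := rplChainEvens t d 𝒴 hX hXH q (2*q) 1 rfl L (fun i hi => hmem i (by omega)) c1
    have hl : 1 + 2*q = p := by omega
    rw [hl] at c2
    exact c2

/-! ### shifting Hom-vanishing -/

lemma rplHomZeroOfUsh (Z : C) :
    ∀ (m : ℕ) (W : C), (∀ h : rplUsh m W ⟶ Z, h = 0) → ∀ (j : ℤ), j = -(m:ℤ) →
      ∀ g : W ⟶ Z⟦j⟧, g = 0
  | 0, W, hm, j, hj, g => by
      obtain rfl : j = 0 := by simpa using hj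
      have h0 : g ≫ (shiftFunctorZero C ℤ).hom.app Z = 0 := hm _
      rw [← cancel_mono ((shiftFunctorZero C ℤ).hom.app Z), h0, zero_comp]
  | (m+1), W, hm, j, hj, g => by
      have hrec := rplHomZeroOfUsh Z m (W⟦(1:ℤ)⟧) hm (j+1) (by push_cast at hj ⊢; omega)
        ((shiftFunctor C (1:ℤ)).map g ≫ ((shiftFunctorAdd' C j (1:ℤ) (j+1) rfl).app Z).inv)
      have hmap : (shiftFunctor C (1:ℤ)).map g = 0 := by
        rw [← cancel_mono (((shiftFunctorAdd' C j (1:ℤ) (j+1) rfl).app Z).inv), hrec, zero_comp]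
      apply (shiftFunctor C (1:ℤ)).map_injective
      rw [hmap, Functor.map_zero]

/-! ### vanishing against d-factors -/

lemma rplFacdVanish (t : TStructure C) (d : ℕ) (hd : 1 ≤ d) {𝒴 : Set C} {Z : C}
    (hZH : Z ∈ extHeart t d)
    (hZ : ∀ Y ∈ 𝒴, ∀ j : ℤ, j ≤ 0 → ∀ f : Y ⟶ Z⟦j⟧, f = 0)
    {W : C} (hW : W ∈ facd t d 𝒴) {j : ℤ} (hj : j ≤ 0) (f : W ⟶ Z⟦j⟧) : f = 0 := by
  obtain ⟨hWH, Zc, Xc, h0, H⟩ := hW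
  subst h0
  have key : ∀ (m : ℕ), m ≤ d → ∀ (j' : ℤ), j' ≤ (m:ℤ) - d →
      ∀ g : Zc (d - m) ⟶ Z⟦j'⟧, g = 0 := by
    intro m
    induction m with
    | zero =>
        intro _ j' hj' g
        exact rplZero t g 0 (1 - (d:ℤ) - j') (by omega)
          (H d hd le_rfl).1.1 (t.ge_shift (1 - (d:ℤ)) j' (1 - (d:ℤ) - j') (by ring) Z hZH.2)
    | succ m ih =>
        intro hm j' hj' g
        obtain ⟨hZH', hXm, ff, gg, hh, hT⟩ := H (d - m) (by omega) (by omega)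
        have hgf : gg ≫ g = 0 := hZ _ hXm j' (by omega) _
        obtain ⟨ψ, hψ⟩ := Triangle.yoneda_exact₃ _ hT g hgf
        have hψ0 : ψ = 0 := by
          have hχ := ih (by omega) (j' - 1) (by omega)
            ((shiftFunctorCompIsoId C (1:ℤ) (-1:ℤ) (by omega)).inv.app (Zc (d - m)) ≫
              (shiftFunctor C (-1:ℤ)).map ψ ≫
              ((shiftFunctorAdd' C j' (-1:ℤ) (j' - 1) (by omega)).app Z).inv)
          have hmap : (shiftFunctor C (-1:ℤ)).map ψ = 0 := by
            rw [show (shiftFunctor C (-1:ℤ)).map ψ =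
              (shiftFunctorCompIsoId C (1:ℤ) (-1:ℤ) (by omega)).hom.app (Zc (d - m)) ≫
              ((shiftFunctorCompIsoId C (1:ℤ) (-1:ℤ) (by omega)).inv.app (Zc (d - m)) ≫
                (shiftFunctor C (-1:ℤ)).map ψ ≫
                ((shiftFunctorAdd' C j' (-1:ℤ) (j' - 1) (by omega)).app Z).inv) ≫
              ((shiftFunctorAdd' C j' (-1:ℤ) (j' - 1) (by omega)).app Z).hom from by simp; rfl, hχ]
            simp
            rfl
          apply (shiftFunctor C (-1:ℤ)).map_injective
          rw [hmap, Functor.map_zero]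
        rw [hψ, hψ0, comp_zero]
        rfl
  have hdd := key d le_rfl j (by omega)
  rw [Nat.sub_self] at hdd
  exact hdd f

/-! ### the hard inclusion -/

lemma rplRPerpFacdSubset (t : TStructure C) (d : ℕ) (hd : 1 ≤ d) {𝒴 : Set C}
    (h𝒴 : 𝒴 ⊆ extHeart t d) {Z : C} (hZH : Z ∈ extHeart t d)
    (hZ : ∀ W ∈ facd t d 𝒴, ∀ f : W ⟶ Z, f = 0)
    {Y : C} (hY : Y ∈ 𝒴) (j : ℤ) (hj : j ≤ 0) (f : Y ⟶ Z⟦j⟧) : f = 0 := by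
  by_cases hjd : j ≤ -(d:ℤ)
  · exact rplZero t f 0 (1 - (d:ℤ) - j) (by omega) (h𝒴 hY).1
      (t.ge_shift (1 - (d:ℤ)) j (1 - (d:ℤ) - j) (by ring) Z hZH.2)
  · push_neg at hjd
    by_cases hj0 : j = 0
    · subst hj0
      have hfac : Y ∈ facd t d 𝒴 :=
        RplChain.mem_facd ((rplChainPadYZero t d 𝒴 hY (h𝒴 hY) d).1)
      have h0 : f ≫ (shiftFunctorZero C ℤ).hom.app Z = 0 := hZ Y hfac _
      rw [← cancel_mono ((shiftFunctorZero C ℤ).hom.app Z), h0, zero_comp]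
    · obtain ⟨n, hn⟩ : ∃ n : ℕ, (n:ℤ) = -j := ⟨(-j).toNat, Int.toNat_of_nonneg (by omega)⟩
      have hn1 : 1 ≤ n := by omega
      have hnd : n + 1 ≤ d := by omega
      obtain ⟨L, G, hL, hG, ι, π, δ, hT⟩ :=
        t.exists_triangle Y (-(d:ℤ) + n) (1 - (d:ℤ) + n) (by ring)
      have hYH := h𝒴 hY
      have hLge : t.ge (1 - (d:ℤ)) L := by
        refine rplGEExt t _ (inv_rot_of_distTriang _ hT) (1 - (d:ℤ)) ?_ hYH.2
        exact t.ge_antitone (show 1 - (d:ℤ) ≤ 2 - (d:ℤ) + n by omega) _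
          (t.ge_shift (1 - (d:ℤ) + n) (-1) (2 - (d:ℤ) + n) (by ring) G hG)
      have hGH : G ∈ extHeart t d := by
        constructor
        · exact rplLEExt t _ (rot_of_distTriang _ hT) 0 hYH.1
            (t.le_monotone (show -(d:ℤ) + n - 1 ≤ 0 by omega) _
              (t.le_shift (-(d:ℤ) + n) 1 (-(d:ℤ) + n - 1) (by ring) L hL))
        · exact t.ge_antitone (show 1 - (d:ℤ) ≤ 1 - (d:ℤ) + n by omega) _ hG
      have hpad : ∀ i : ℕ, i ≤ d - 1 - n → rplItsh i L ∈ extHeart t d := fun i hi =>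
        rplItshExtHeart t d i L (-(d:ℤ) + n) (1 - (d:ℤ)) hL hLge (by omega) le_rfl
      have cpadL : RplChain t d 𝒴 (d - 1 - n) L := rplChainPad t d 𝒴 hY hYH L _ hpad
      have cG : RplChain t d 𝒴 (d - 1 - n + 1) G := RplChain.step hGH hY hT cpadL
      have cTop : RplChain t d 𝒴 (d - 1 - n + 1) (rplItsh n (rplUsh n G)) :=
        RplChain.ofIso (rplItshUshIso n G).symm cG
      have hmemTop : ∀ i : ℕ, i ≤ n → rplItsh i (rplUsh n G) ∈ extHeart t d := fun i hi =>
        rplItshExtHeart t d i (rplUsh n G) (-(n:ℤ)) (1 - (d:ℤ))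
          (rplUshLE t n G 0 (-(n:ℤ)) (by omega) hGH.1)
          (rplUshGE t n G (1 - (d:ℤ) + n) (1 - (d:ℤ)) (by ring) hG)
          (by omega) le_rfl
      have hush : ∀ h : rplUsh n G ⟶ Z, h = 0 := by
        rcases Nat.even_or_odd n with ⟨q, hq⟩ | ⟨q, hq⟩
        · have c := rplChainEvens t d 𝒴 hY hYH q n (d - 1 - n + 1) (by omega)
            (rplUsh n G) hmemTop cTop
          have hlen : d - 1 - n + 1 + n = d := by omega
          rw [hlen] at c
          exact fun h => hZ _ (RplChain.mem_facd c) h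
        · have c := rplChainOdds t d 𝒴 hY hYH q n (d - 1 - n + 1) (by omega)
            (rplUsh n G) hmemTop cTop
          have hlen : d - 1 - n + 1 + n = d := by omega
          rw [hlen] at c
          intro h
          have hdesc : biprod.desc h (0 : Y ⟶ Z) = 0 :=
            hZ _ (RplChain.mem_facd c) _
          have hinl : biprod.inl ≫ biprod.desc h (0 : Y ⟶ Z) = h := biprod.inl_desc _ _
          rw [← hinl, hdesc, comp_zero]
      have hGEZj : t.ge (1 - (d:ℤ) + n) (Z⟦j⟧) := by
        have hsh := t.ge_shift (1 - (d:ℤ)) j (1 - (d:ℤ) - j) (by ring) Z hZH.2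
        have he : 1 - (d:ℤ) - j = 1 - (d:ℤ) + n := by omega
        rwa [he] at hsh
      have hι : ι ≫ f = 0 :=
        rplZero t _ (-(d:ℤ) + n) (1 - (d:ℤ) + n) (by omega) hL hGEZj
      obtain ⟨g, hg⟩ := Triangle.yoneda_exact₂ _ hT f hι
      have hg0 : g = 0 := rplHomZeroOfUsh Z n G hush j (by omega) g
      rw [hg, hg0, comp_zero]
      rfl

end AuxRPL

/-- **(Lemma, orthogonals of `d`-factor closures.)** For any subcategory `𝒴` of
`D^{[-d+1,0]}`, we have `𝒴^{⊥_{≤0}} = (Fac_d 𝒴)^{⊥_{≤0}} = (Fac_d 𝒴)^⊥`. -/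
theorem rPerpLe0_facd (t : TStructure C) (hb : IsBoundedTStr t)
    (d : ℕ) (hd : 1 ≤ d) (𝒴 : Set C) (h𝒴 : 𝒴 ⊆ extHeart t d) :
    rPerpLe0 t d 𝒴 = rPerpLe0 t d (facd t d 𝒴) ∧
    rPerpLe0 t d 𝒴 = rPerp t d (facd t d 𝒴) := by
  have hsub : ∀ {Y : C}, Y ∈ 𝒴 → Y ∈ facd t d 𝒴 := fun hY =>
    RplChain.mem_facd ((rplChainPadYZero t d 𝒴 hY (h𝒴 hY) d).1)
  have hfwd : ∀ {Z : C}, Z ∈ rPerpLe0 t d 𝒴 →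
      ∀ W ∈ facd t d 𝒴, ∀ j : ℤ, j ≤ 0 → ∀ f : W ⟶ Z⟦j⟧, f = 0 :=
    fun hZ W hW j hj f => rplFacdVanish t d hd hZ.1 hZ.2 hW hj f
  constructor
  · ext Z
    constructor
    · intro hZ
      exact ⟨hZ.1, fun W hW j hj f => hfwd hZ W hW j hj f⟩
    · intro hZ
      exact ⟨hZ.1, fun Y hY j hj f => hZ.2 Y (hsub hY) j hj f⟩
  · ext Z
    constructor
    · intro hZ
      refine ⟨hZ.1, fun W hW f => ?_⟩
      have h0 := hfwd hZ W hW 0 le_rfl (f ≫ (shiftFunctorZero C ℤ).inv.app Z)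
      rw [← cancel_mono ((shiftFunctorZero C ℤ).inv.app Z), zero_comp]
      exact h0
    · intro hZ
      exact ⟨hZ.1, fun Y hY j hj f => rplRPerpFacdSubset t d hd h𝒴 hZ.1 hZ.2 hY j hj f⟩
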